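/- For every n ≥ 2, a proper 3-coloring ψ of the 4-cycle C_2 = v_1v_2v_3v_4 extends to a proper 3-coloring of the graph T'_n + u_1u_3 (the reduced Thomas-Walls graph with the interface edge u_1u_3 added back) if and only if ψ(v_1) = ψ(v_3) and ψ(v_2) ≠ ψ(v_4). -/

import Mathlib

open SimpleGraph

/-- Pairs of natural numbers encoding the edges of the Thomas-Walls graph `T_n`.
The recursive construction (T_1 = K_4; T_{m+1} obtained from T_m by deleting the edge
`a_m b_m`, which lies in two triangles, and adding vertices `x_m, y_m, z_m` with edges
`a_m x_m, b_m y_m, b_m z_m, x_m y_m, x_m z_m, y_m z_m`) is realized explicitly with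
vertex `0 = c`, `1 = d`, `3k-1 = a_k`, `3k = b_k`, `3k+1 = x_k`, where `a_{k+1} = y_k`
and `b_{k+1} = z_k`; `T_1` is `K_4` on `{c, d, a_1, b_1}`. -/
def twPairs (n : ℕ) : Set (ℕ × ℕ) :=
  {p | p = (0, 2) ∨ p = (0, 3) ∨ p = (1, 2) ∨ p = (1, 3) ∨ p = (0, 1) ∨
       p = (3 * n - 1, 3 * n) ∨
       ∃ k, 1 ≤ k ∧ k < n ∧
         (p = (3 * k - 1, 3 * k + 1) ∨ p = (3 * k, 3 * k + 2) ∨ p = (3 * k, 3 * k + 3) ∨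
          p = (3 * k + 1, 3 * k + 2) ∨ p = (3 * k + 1, 3 * k + 3))}

/-- The Thomas-Walls graph `T_n` (for `n ≥ 1`), on the `3n + 1` vertices `0, …, 3n`. -/
def thomasWalls (n : ℕ) : SimpleGraph (Fin (3 * n + 1)) :=
  SimpleGraph.fromRel fun i j => ((i : ℕ), (j : ℕ)) ∈ twPairs n

/-- The reduced Thomas-Walls graph `T'_n = T_n − {u₁u₃, v₁v₃}` (for `n ≥ 2`). -/
def reducedThomasWalls (n : ℕ) : SimpleGraph (Fin (3 * n + 1)) :=
  SimpleGraph.fromRel fun i j =>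
    ((i : ℕ), (j : ℕ)) ∈ twPairs n \ ({(0, 1), (3 * n - 1, 3 * n)} : Set (ℕ × ℕ))

/-- The vertex of `T_n` with index `k` (for `k ≤ 3n`). -/
def twV (n k : ℕ) : Fin (3 * n + 1) := ⟨k % (3 * n + 1), Nat.mod_lt _ (by omega)⟩

/-- `u₁ = c`: a vertex of the 4-cycle `C₁ = u₁u₂u₃u₄` of `T_n` with `u₁u₃ ∈ E(T_n)`. -/
def tw_u1 (n : ℕ) : Fin (3 * n + 1) := twV n 0
/-- `u₂ = a₁`. -/
def tw_u2 (n : ℕ) : Fin (3 * n + 1) := twV n 2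
/-- `u₃ = d`. -/
def tw_u3 (n : ℕ) : Fin (3 * n + 1) := twV n 1
/-- `u₄ = b₁`. -/
def tw_u4 (n : ℕ) : Fin (3 * n + 1) := twV n 3
/-- `v₁ = y_{n-1}`: a vertex of the 4-cycle `C₂ = v₁v₂v₃v₄` of `T_n` with `v₁v₃ ∈ E(T_n)`. -/
def tw_v1 (n : ℕ) : Fin (3 * n + 1) := twV n (3 * n - 1)
/-- `v₂ = x_{n-1}`. -/
def tw_v2 (n : ℕ) : Fin (3 * n + 1) := twV n (3 * n - 2)
/-- `v₃ = z_{n-1}`. -/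
def tw_v3 (n : ℕ) : Fin (3 * n + 1) := twV n (3 * n)
/-- `v₄ = b_{n-1}`. -/
def tw_v4 (n : ℕ) : Fin (3 * n + 1) := twV n (3 * n - 3)

/-- For `n ≥ 2`, a proper 3-coloring `ψ` of the 4-cycle `C₂ = v₁v₂v₃v₄` extends to a
proper 3-coloring of `T'_n + u₁u₃` (the reduced Thomas-Walls graph with the interface
edge `u₁u₃` added back) if and only if `ψ(v₁) = ψ(v₃)` and `ψ(v₂) ≠ ψ(v₄)`. -/
-- pigeonhole on Fin 3
lemma fin3_pigeon : ∀ a x y z : Fin 3, a ≠ x → y ≠ a → y ≠ x → z ≠ a → z ≠ x → y = z := by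
  decide

-- the explicit coloring
def twf (n : ℕ) (A B C : Fin 3) (m : ℕ) : Fin 3 :=
  if m = 0 then B else if m = 1 then (if n % 2 = 0 then A else C)
  else if m % 3 = 1 then B
  else if (n + (m + 1) / 3) % 2 = 0 then A else C

lemma twf_eval2 (n : ℕ) (A B C : Fin 3) (k : ℕ) (hk : 1 ≤ k) :
    twf n A B C (3 * k - 1) = if (n + k) % 2 = 0 then A else C := by
  have h0 : ¬ (3 * k - 1 = 0) := by omega
  have h1 : ¬ (3 * k - 1 = 1) := by omega
  have h2 : ¬ ((3 * k - 1) % 3 = 1) := by omega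
  have h3 : (3 * k - 1 + 1) / 3 = k := by omega
  simp [twf, h0, h1, h2, h3]

lemma twf_eval0 (n : ℕ) (A B C : Fin 3) (k : ℕ) (hk : 1 ≤ k) :
    twf n A B C (3 * k) = if (n + k) % 2 = 0 then A else C := by
  have h0 : ¬ (3 * k = 0) := by omega
  have h1 : ¬ (3 * k = 1) := by omega
  have h2 : ¬ ((3 * k) % 3 = 1) := by omega
  have h3 : (3 * k + 1) / 3 = k := by omega
  simp [twf, h0, h1, h2, h3]

lemma twf_eval1 (n : ℕ) (A B C : Fin 3) (k : ℕ) (hk : 1 ≤ k) :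
    twf n A B C (3 * k + 1) = B := by
  have h0 : ¬ (3 * k + 1 = 0) := by omega
  have h1 : ¬ (3 * k + 1 = 1) := by omega
  have h2 : (3 * k + 1) % 3 = 1 := by omega
  simp [twf, h0, h1, h2, show k ≠ 0 by omega]

lemma g_ne (A C : Fin 3) (hAC : A ≠ C) (m : ℕ) :
    (if m % 2 = 0 then A else C) ≠ (if (m + 1) % 2 = 0 then A else C) := by
  rcases Nat.mod_two_eq_zero_or_one m with h | h
  · have h' : ¬ ((m + 1) % 2 = 0) := by omega
    simp [h, h', hAC]
  · have h' : (m + 1) % 2 = 0 := by omega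
    have h'' : ¬ (m % 2 = 0) := by omega
    simp [h'', h', hAC.symm]

lemma g_ne_B (A B C : Fin 3) (hAB : A ≠ B) (hBC : B ≠ C) (m : ℕ) :
    (if m % 2 = 0 then A else C) ≠ B := by
  split
  · exact hAB
  · exact hBC.symm

-- key: the coloring is proper on all relevant pairs
lemma twf_ne (n : ℕ) (hn : 2 ≤ n) (A B C : Fin 3)
    (hAB : A ≠ B) (hBC : B ≠ C) (hAC : A ≠ C) (i j : ℕ)
    (hmem : (i, j) ∈ twPairs n) (hne : (i, j) ≠ (3 * n - 1, 3 * n)) :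
    twf n A B C i ≠ twf n A B C j := by
  simp only [twPairs, Set.mem_setOf_eq, Prod.mk.injEq] at hmem
  rcases hmem with ⟨rfl, rfl⟩ | ⟨rfl, rfl⟩ | ⟨rfl, rfl⟩ | ⟨rfl, rfl⟩ | ⟨rfl, rfl⟩ |
    ⟨rfl, rfl⟩ | ⟨k, hk1, hk2, h⟩
  · -- (0,2)
    have e2 := twf_eval2 n A B C 1 le_rfl
    norm_num at e2
    rw [show (2:ℕ) = 3 * 1 - 1 by norm_num, e2]
    simp only [twf, if_pos rfl]
    exact (g_ne_B A B C hAB hBC (n+1)).symm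
  · -- (0,3)
    have e0 := twf_eval0 n A B C 1 le_rfl
    norm_num at e0
    rw [e0]
    simp only [twf, if_pos rfl]
    exact (g_ne_B A B C hAB hBC (n+1)).symm
  · -- (1,2)
    rw [show (2:ℕ) = 3 * 1 - 1 by norm_num, twf_eval2 n A B C 1 le_rfl]
    simp only [twf, if_neg (by norm_num : ¬(1:ℕ) = 0), if_pos rfl]
    exact g_ne A C hAC n
  · -- (1,3)
    have e0 := twf_eval0 n A B C 1 le_rfl
    norm_num at e0
    rw [e0]
    simp only [twf, if_neg (by norm_num : ¬(1:ℕ) = 0), if_pos rfl]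
    exact g_ne A C hAC n
  · -- (0,1)
    simp only [twf, if_pos rfl, if_neg (by norm_num : ¬(1:ℕ) = 0)]
    exact (g_ne_B A B C hAB hBC n).symm
  · exact absurd rfl hne
  · rcases h with ⟨rfl, rfl⟩ | ⟨rfl, rfl⟩ | ⟨rfl, rfl⟩ | ⟨rfl, rfl⟩ | ⟨rfl, rfl⟩
    · rw [twf_eval2 n A B C k hk1, twf_eval1 n A B C k hk1]
      exact g_ne_B A B C hAB hBC (n + k)
    · rw [twf_eval0 n A B C k hk1,
        show 3 * k + 2 = 3 * (k + 1) - 1 by omega, twf_eval2 n A B C (k+1) (by omega)]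
      exact g_ne A C hAC (n + k)
    · rw [twf_eval0 n A B C k hk1,
        show 3 * k + 3 = 3 * (k + 1) by omega, twf_eval0 n A B C (k+1) (by omega)]
      exact g_ne A C hAC (n + k)
    · rw [twf_eval1 n A B C k hk1,
        show 3 * k + 2 = 3 * (k + 1) - 1 by omega, twf_eval2 n A B C (k+1) (by omega)]
      exact (g_ne_B A B C hAB hBC (n + (k+1))).symm
    · rw [twf_eval1 n A B C k hk1,
        show 3 * k + 3 = 3 * (k + 1) by omega, twf_eval0 n A B C (k+1) (by omega)]
      exact (g_ne_B A B C hAB hBC (n + (k+1))).symm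

lemma twV_val (n : ℕ) (k : ℕ) (hk : k < 3 * n + 1) : (twV n k).val = k :=
  Nat.mod_eq_of_lt hk

lemma adj_helper (n : ℕ) (hn : 2 ≤ n) (i j : ℕ) (hi : i < 3 * n + 1) (hj : j < 3 * n + 1)
    (hij : i ≠ j) (hmem : (i, j) ∈ twPairs n) (hne : (i, j) ≠ (3 * n - 1, 3 * n)) :
    (reducedThomasWalls n ⊔ SimpleGraph.fromEdgeSet {s(tw_u1 n, tw_u3 n)}).Adj
      (twV n i) (twV n j) := by
  have hvi : (twV n i).val = i := twV_val n i hi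
  have hvj : (twV n j).val = j := twV_val n j hj
  have hV : twV n i ≠ twV n j := by
    intro h
    apply hij
    rw [← hvi, ← hvj, h]
  by_cases h01 : (i, j) = (0, 1)
  · right
    rw [SimpleGraph.fromEdgeSet_adj]
    rw [Prod.mk.injEq] at h01
    obtain ⟨rfl, rfl⟩ := h01
    exact ⟨rfl, hV⟩
  · left
    rw [reducedThomasWalls, SimpleGraph.fromRel_adj]
    refine ⟨hV, Or.inl ⟨?_, ?_⟩⟩
    · rw [hvi, hvj]; exact hmem
    · rw [hvi, hvj]
      simp only [Set.mem_insert_iff, Set.mem_singleton_iff]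
      push_neg
      exact ⟨h01, hne⟩


theorem reducedThomasWalls_plus_extend_iff (n : ℕ) (hn : 2 ≤ n)
    (ψ : Fin (3 * n + 1) → Fin 3)
    (h1 : ψ (tw_v1 n) ≠ ψ (tw_v2 n)) (h2 : ψ (tw_v2 n) ≠ ψ (tw_v3 n))
    (h3 : ψ (tw_v3 n) ≠ ψ (tw_v4 n)) (h4 : ψ (tw_v4 n) ≠ ψ (tw_v1 n)) :
    (∃ φ : Fin (3 * n + 1) → Fin 3,
      (∀ a b, (reducedThomasWalls n ⊔
          SimpleGraph.fromEdgeSet {s(tw_u1 n, tw_u3 n)}).Adj a b → φ a ≠ φ b) ∧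
      φ (tw_v1 n) = ψ (tw_v1 n) ∧ φ (tw_v2 n) = ψ (tw_v2 n) ∧
      φ (tw_v3 n) = ψ (tw_v3 n) ∧ φ (tw_v4 n) = ψ (tw_v4 n)) ↔
    (ψ (tw_v1 n) = ψ (tw_v3 n) ∧ ψ (tw_v2 n) ≠ ψ (tw_v4 n)) := by
  constructor
  · rintro ⟨φ, hφ, e1, e2, e3, e4⟩
    have key : ∀ i j : ℕ, i < 3 * n + 1 → j < 3 * n + 1 → i ≠ j →
        (i, j) ∈ twPairs n → (i, j) ≠ (3 * n - 1, 3 * n) →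
        φ (twV n i) ≠ φ (twV n j) :=
      fun i j hi hj hij hm hne => hφ _ _ (adj_helper n hn i j hi hj hij hm hne)
    have main : ∀ k, k ≤ n - 1 → φ (twV n (3 * k + 2)) = φ (twV n (3 * k + 3)) := by
      intro k
      induction k with
      | zero =>
        intro _
        have h02 : (0, 2) ∈ twPairs n := Or.inl rfl
        have h03 : (0, 3) ∈ twPairs n := Or.inr (Or.inl rfl)
        have h12 : (1, 2) ∈ twPairs n := Or.inr (Or.inr (Or.inl rfl))
        have h13 : (1, 3) ∈ twPairs n := Or.inr (Or.inr (Or.inr (Or.inl rfl)))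
        have h01 : (0, 1) ∈ twPairs n := Or.inr (Or.inr (Or.inr (Or.inr (Or.inl rfl))))
        have k01 := key 0 1 (by omega) (by omega) (by omega) h01
          (by rw [Ne, Prod.mk.injEq]; omega)
        have k02 := key 0 2 (by omega) (by omega) (by omega) h02
          (by rw [Ne, Prod.mk.injEq]; omega)
        have k03 := key 0 3 (by omega) (by omega) (by omega) h03
          (by rw [Ne, Prod.mk.injEq]; omega)
        have k12 := key 1 2 (by omega) (by omega) (by omega) h12
          (by rw [Ne, Prod.mk.injEq]; omega)
        have k13 := key 1 3 (by omega) (by omega) (by omega) h13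
          (by rw [Ne, Prod.mk.injEq]; omega)
        exact fin3_pigeon (φ (twV n 0)) (φ (twV n 1)) _ _ k01 k02.symm k12.symm
          k03.symm k13.symm
      | succ k ih =>
        intro hk
        have hk' : k ≤ n - 1 := by omega
        have h := ih hk'
        -- gadget at level k+1
        have hmem : ∀ p : ℕ × ℕ,
            (p = (3 * (k+1) - 1, 3 * (k+1) + 1) ∨ p = (3 * (k+1), 3 * (k+1) + 2) ∨
             p = (3 * (k+1), 3 * (k+1) + 3) ∨ p = (3 * (k+1) + 1, 3 * (k+1) + 2) ∨
             p = (3 * (k+1) + 1, 3 * (k+1) + 3)) → p ∈ twPairs n :=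
          fun p hp => Or.inr (Or.inr (Or.inr (Or.inr (Or.inr (Or.inr
            ⟨k + 1, by omega, by omega, hp⟩)))))
        have kax := key (3*k+2) (3*k+4) (by omega) (by omega) (by omega)
          (hmem _ (Or.inl (by rw [Prod.mk.injEq]; omega)))
          (by rw [Ne, Prod.mk.injEq]; omega)
        have kby := key (3*k+3) (3*k+5) (by omega) (by omega) (by omega)
          (hmem _ (Or.inr (Or.inl (by rw [Prod.mk.injEq]; omega))))
          (by rw [Ne, Prod.mk.injEq]; omega)
        have kbz := key (3*k+3) (3*k+6) (by omega) (by omega) (by omega)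
          (hmem _ (Or.inr (Or.inr (Or.inl (by rw [Prod.mk.injEq]; omega)))))
          (by rw [Ne, Prod.mk.injEq]; omega)
        have kxy := key (3*k+4) (3*k+5) (by omega) (by omega) (by omega)
          (hmem _ (Or.inr (Or.inr (Or.inr (Or.inl (by rw [Prod.mk.injEq]; omega))))))
          (by rw [Ne, Prod.mk.injEq]; omega)
        have kxz := key (3*k+4) (3*k+6) (by omega) (by omega) (by omega)
          (hmem _ (Or.inr (Or.inr (Or.inr (Or.inr (by rw [Prod.mk.injEq]; omega))))))
          (by rw [Ne, Prod.mk.injEq]; omega)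
        have goal : φ (twV n (3*k+5)) = φ (twV n (3*k+6)) := by
          refine fin3_pigeon (φ (twV n (3*k+3))) (φ (twV n (3*k+4))) _ _ ?_
            kby.symm kxy.symm kbz.symm kxz.symm
          rw [← h]; exact kax
        have e5 : 3 * (k+1) + 2 = 3*k+5 := by omega
        have e6 : 3 * (k+1) + 3 = 3*k+6 := by omega
        rw [e5, e6]; exact goal
    have hm1 := main (n - 1) le_rfl
    have hm2 := main (n - 2) (by omega)
    have r1 : twV n (3 * (n-1) + 2) = tw_v1 n := congrArg (twV n) (by omega)
    have r3 : twV n (3 * (n-1) + 3) = tw_v3 n := congrArg (twV n) (by omega)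
    have r4 : twV n (3 * (n-2) + 3) = tw_v4 n := congrArg (twV n) (by omega)
    constructor
    · rw [← e1, ← e3, ← r1, ← r3]; exact hm1
    · -- ψ v2 ≠ ψ v4
      have kax := key (3*n-4) (3*n-2) (by omega) (by omega) (by omega)
        (Or.inr (Or.inr (Or.inr (Or.inr (Or.inr (Or.inr
          ⟨n - 1, by omega, by omega, Or.inl (by rw [Prod.mk.injEq]; omega)⟩))))))
        (by rw [Ne, Prod.mk.injEq]; omega)
      have r2 : twV n (3 * n - 2) = tw_v2 n := rfl
      have r4' : twV n (3 * (n-2) + 2) = twV n (3 * n - 4) := congrArg (twV n) (by omega)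
      rw [← e2, ← e4, ← r4, ← hm2, r4', ← r2]
      exact kax.symm
  · rintro ⟨hv13, hv24⟩
    set A := ψ (tw_v1 n) with hA
    set B := ψ (tw_v2 n) with hB
    set C := ψ (tw_v4 n) with hC
    have hAB : A ≠ B := h1
    have hAC : A ≠ C := h4.symm
    have hBC : B ≠ C := hv24
    refine ⟨fun v => twf n A B C v.val, ?_, ?_, ?_, ?_, ?_⟩
    · intro a b hab
      rcases hab with hab | hab
      · rw [reducedThomasWalls, SimpleGraph.fromRel_adj] at hab
        obtain ⟨hne, h | h⟩ := hab
        · obtain ⟨hm, hx⟩ := h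
          refine twf_ne n hn A B C hAB hBC hAC _ _ hm ?_
          simp only [Set.mem_insert_iff, Set.mem_singleton_iff] at hx
          push_neg at hx
          exact hx.2
        · obtain ⟨hm, hx⟩ := h
          refine (twf_ne n hn A B C hAB hBC hAC _ _ hm ?_).symm
          simp only [Set.mem_insert_iff, Set.mem_singleton_iff] at hx
          push_neg at hx
          exact hx.2
      · rw [SimpleGraph.fromEdgeSet_adj, Set.mem_singleton_iff, Sym2.eq_iff] at hab
        have h01 : ((0:ℕ), (1:ℕ)) ∈ twPairs n :=
          Or.inr (Or.inr (Or.inr (Or.inr (Or.inl rfl))))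
        have hne01 : ((0:ℕ), (1:ℕ)) ≠ (3 * n - 1, 3 * n) := by
          rw [Ne, Prod.mk.injEq]; omega
        have hu1 : (tw_u1 n).val = 0 := Nat.mod_eq_of_lt (by omega)
        have hu3 : (tw_u3 n).val = 1 := Nat.mod_eq_of_lt (by omega)
        rcases hab.1 with ⟨ha, hb⟩ | ⟨ha, hb⟩
        · rw [ha, hb]
          show twf n A B C ((tw_u1 n).val) ≠ twf n A B C ((tw_u3 n).val)
          rw [hu1, hu3]
          exact twf_ne n hn A B C hAB hBC hAC 0 1 h01 hne01
        · rw [ha, hb]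
          show twf n A B C ((tw_u3 n).val) ≠ twf n A B C ((tw_u1 n).val)
          rw [hu1, hu3]
          exact (twf_ne n hn A B C hAB hBC hAC 0 1 h01 hne01).symm
    · show twf n A B C ((tw_v1 n).val) = A
      have : (tw_v1 n).val = 3 * n - 1 := twV_val n _ (by omega)
      rw [this, show 3*n-1 = 3*n-1 from rfl]
      rw [show (3*n-1 : ℕ) = 3 * n - 1 from rfl]
      have := twf_eval2 n A B C n (by omega)
      rw [this, if_pos (by omega)]
    · show twf n A B C ((tw_v2 n).val) = B
      have hv : (tw_v2 n).val = 3 * n - 2 := twV_val n _ (by omega)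
      rw [hv, show 3*n-2 = 3*(n-1)+1 by omega, twf_eval1 n A B C (n-1) (by omega)]
    · show twf n A B C ((tw_v3 n).val) = ψ (tw_v3 n)
      have hv : (tw_v3 n).val = 3 * n := twV_val n _ (by omega)
      rw [hv, twf_eval0 n A B C n (by omega), if_pos (by omega), ← hv13]
    · show twf n A B C ((tw_v4 n).val) = C
      have hv : (tw_v4 n).val = 3 * n - 3 := twV_val n _ (by omega)
      rw [hv, show 3*n-3 = 3*(n-1) by omega, twf_eval0 n A B C (n-1) (by omega),
        if_neg (by omega)]
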